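/- Let R, s, m, c be natural numbers with c ≤ m < R and s + m ≤ R. Then s^c · (R − s)_{m − c} / (R)_m ≤ (s/(R − m))^c · ((R − s)/R)^{m − c}, where (a)_j = a(a−1)⋯(a−j+1) denotes the falling factorial. -/
import Mathlib

lemma lemA (R : ℕ) : ∀ c m : ℕ, c ≤ m → m ≤ R →
    (R - m) ^ c * R.descFactorial (m - c) ≤ R.descFactorial m := by
  intro c
  induction c with
  | zero => intro m _ _; simp
  | succ c ih =>
    intro m hcm hmR
    have hc : c ≤ m := Nat.le_of_succ_le hcm
    have h1 : m - c = (m - (c + 1)) + 1 := by omega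
    have h2 : R.descFactorial (m - c) = (R - (m - (c+1))) * R.descFactorial (m - (c+1)) := by
      rw [h1, Nat.descFactorial_succ]
    have h3 : R - m ≤ R - (m - (c+1)) := by omega
    calc (R - m) ^ (c+1) * R.descFactorial (m - (c+1))
        = (R - m) ^ c * ((R - m) * R.descFactorial (m - (c+1))) := by ring
      _ ≤ (R - m) ^ c * ((R - (m - (c+1))) * R.descFactorial (m - (c+1))) :=
          Nat.mul_le_mul_left _ (Nat.mul_le_mul_right _ h3)
      _ = (R - m) ^ c * R.descFactorial (m - c) := by rw [h2]
      _ ≤ R.descFactorial m := ih m hc hmR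

lemma lemB (R s : ℕ) : ∀ n : ℕ,
    (R - s).descFactorial n * R ^ n ≤ (R - s) ^ n * R.descFactorial n := by
  intro n
  induction n with
  | zero => simp
  | succ n ih =>
    have key : (R - s - n) * R ≤ (R - s) * (R - n) := by
      have h1 : (R - s - n) * R = (R - s) * R - n * R := by rw [Nat.sub_mul]
      have h2 : (R - s) * (R - n) = (R - s) * R - (R - s) * n := by rw [Nat.mul_sub]
      rw [h1, h2]
      exact Nat.sub_le_sub_left (by nlinarith [Nat.sub_le R s]) _
    calc (R - s).descFactorial (n+1) * R ^ (n+1)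
        = ((R - s - n) * R) * ((R - s).descFactorial n * R ^ n) := by
          rw [Nat.descFactorial_succ]; ring
      _ ≤ ((R - s) * (R - n)) * ((R - s) ^ n * R.descFactorial n) :=
          Nat.mul_le_mul key ih
      _ = (R - s) ^ (n+1) * R.descFactorial (n+1) := by
          rw [Nat.descFactorial_succ]; ring

/-- For naturals `c ≤ m < R` and `s + m ≤ R`,
`s^c · (R-s)_{m-c} / (R)_m ≤ (s/(R-m))^c · ((R-s)/R)^{m-c}`,
where `(a)_j` is the falling factorial. -/
theorem stmt_17 (R s m c : ℕ) (hcm : c ≤ m) (hmR : m < R) (hsm : s + m ≤ R) :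
    (s : ℝ) ^ c * ((R - s).descFactorial (m - c)) / (R.descFactorial m)
      ≤ ((s : ℝ) / ((R : ℝ) - m)) ^ c * (((R : ℝ) - s) / R) ^ (m - c) := by
  set n := m - c with hn
  -- key natural number inequality
  have key : s ^ c * ((R - s).descFactorial n) * ((R - m) ^ c * R ^ n)
      ≤ s ^ c * (R - s) ^ n * R.descFactorial m := by
    calc s ^ c * ((R - s).descFactorial n) * ((R - m) ^ c * R ^ n)
        = (s ^ c * (R - m) ^ c) * ((R - s).descFactorial n * R ^ n) := by ring
      _ ≤ (s ^ c * (R - m) ^ c) * ((R - s) ^ n * R.descFactorial n) :=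
          Nat.mul_le_mul_left _ (lemB R s n)
      _ = (s ^ c * (R - s) ^ n) * ((R - m) ^ c * R.descFactorial n) := by ring
      _ ≤ (s ^ c * (R - s) ^ n) * R.descFactorial m :=
          Nat.mul_le_mul_left _ (by
            have := lemA R c m hcm (Nat.le_of_lt hmR)
            simpa [hn] using this)
      _ = s ^ c * (R - s) ^ n * R.descFactorial m := by ring
  have hsR : s ≤ R := by omega
  have hRm : (0 : ℝ) < (R : ℝ) - m := by
    have : (m : ℝ) < R := by exact_mod_cast hmR
    linarith
  have hR : (0 : ℝ) < (R : ℝ) := by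
    have : 0 < R := by omega
    exact_mod_cast this
  have hD : (0 : ℝ) < R.descFactorial m := by
    have : R.descFactorial m ≠ 0 := by
      rw [Ne, Nat.descFactorial_eq_zero_iff_lt]; omega
    exact_mod_cast Nat.pos_of_ne_zero this
  have hcast1 : ((R - s : ℕ) : ℝ) = (R : ℝ) - s := by
    push_cast [hsR]; ring
  have hcast2 : ((R - m : ℕ) : ℝ) = (R : ℝ) - m := by
    push_cast [Nat.le_of_lt hmR]; ring
  have keyR : (s : ℝ) ^ c * ((R - s).descFactorial n) * (((R:ℝ) - m) ^ c * (R:ℝ) ^ n)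
      ≤ (s : ℝ) ^ c * ((R:ℝ) - s) ^ n * R.descFactorial m := by
    have := key
    have h := (Nat.cast_le (α := ℝ)).mpr this
    push_cast at h
    rw [hcast1, hcast2] at h
    convert h using 1
  rw [div_pow, div_pow, div_mul_div_comm]
  rw [div_le_div_iff₀ hD (by positivity)]
  calc (s : ℝ) ^ c * ((R - s).descFactorial n) * (((R:ℝ) - m) ^ c * (R:ℝ) ^ n)
      ≤ (s : ℝ) ^ c * ((R:ℝ) - s) ^ n * R.descFactorial m := keyR
    _ = (s : ℝ) ^ c * ((R:ℝ) - s) ^ n * R.descFactorial m := rfl
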